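/- Let π σ : ℕ → (Fin n → ℝ) be sequences and β ∈ ℝ such that π m i = β + σ m i for all m : ℕ and i : Fin n. Then for every TDLTL formula φ in positive normal form over dimension n, π ⊨ φ if and only if σ ⊨ φ; that is, similar orbits satisfy exactly the same TDLTL formulas. -/
import Mathlib


/-- Comparison symbol `∼ ∈ {≥, >}`. -/
inductive Cmp where
  | ge : Cmp
  | gt : Cmp

/-- The relation on `ℝ` denoted by a comparison symbol. -/
def Cmp.rel : Cmp → ℝ → ℝ → Prop
  | .ge => (· ≥ ·)
  | .gt => (· > ·)

/-- TDLTL formulas in positive normal form over dimension `n`. -/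
inductive TDLTL (n : ℕ) where
  | top : TDLTL n
  | bot : TDLTL n
  | atom (i j : Fin n) (c : Cmp) (α : ℝ) : TDLTL n
  | natom (i j : Fin n) (c : Cmp) (α : ℝ) : TDLTL n
  | and (φ₁ φ₂ : TDLTL n) : TDLTL n
  | or (φ₁ φ₂ : TDLTL n) : TDLTL n
  | next (φ : TDLTL n) : TDLTL n
  | untl (φ₁ φ₂ : TDLTL n) : TDLTL n
  | release (φ₁ φ₂ : TDLTL n) : TDLTL n

/-- The suffix `π[m..]` of a sequence. -/
def shift {n : ℕ} (π : ℕ → Fin n → ℝ) (m : ℕ) : ℕ → Fin n → ℝ :=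
  fun t => π (m + t)

/-- (Unbounded) TDLTL satisfaction `π ⊨ φ`. -/
def Sat {n : ℕ} : TDLTL n → (ℕ → Fin n → ℝ) → Prop
  | .top, _ => True
  | .bot, _ => False
  | .atom i j c α, π => c.rel (π 0 i - π 0 j) α
  | .natom i j c α, π => ¬ c.rel (π 0 i - π 0 j) α
  | .and φ₁ φ₂, π => Sat φ₁ π ∧ Sat φ₂ π
  | .or φ₁ φ₂, π => Sat φ₁ π ∨ Sat φ₂ π
  | .next φ, π => Sat φ (shift π 1)
  | .untl φ₁ φ₂, π => ∃ j : ℕ, Sat φ₂ (shift π j) ∧ ∀ t < j, Sat φ₁ (shift π t)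
  | .release φ₁ φ₂, π =>
      (∀ j : ℕ, Sat φ₂ (shift π j)) ∨
      (∃ j : ℕ, Sat φ₁ (shift π j) ∧ ∀ t ≤ j, Sat φ₂ (shift π t))


/-- Similar orbits satisfy exactly the same TDLTL formulas: if
`π m i = β + σ m i` for all `m` and `i`, then `π ⊨ φ ↔ σ ⊨ φ`. -/
theorem similar_orbits_sat {n : ℕ} (π σ : ℕ → Fin n → ℝ) (β : ℝ)
    (h : ∀ (m : ℕ) (i : Fin n), π m i = β + σ m i) :
    ∀ φ : TDLTL n, Sat φ π ↔ Sat φ σ := by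
  intro φ
  induction φ generalizing π σ with
  | top => simp [Sat]
  | bot => simp [Sat]
  | atom i j c α =>
      simp only [Sat, h]; ring_nf
  | natom i j c α =>
      simp only [Sat, h]; ring_nf
  | and φ₁ φ₂ ih1 ih2 => simp [Sat, ih1 _ _ h, ih2 _ _ h]
  | or φ₁ φ₂ ih1 ih2 => simp [Sat, ih1 _ _ h, ih2 _ _ h]
  | next φ ih => exact ih _ _ (fun m i => h (1 + m) i)
  | untl φ₁ φ₂ ih1 ih2 =>
      simp only [Sat]
      constructor <;> rintro ⟨j, hj, ht⟩
      · exact ⟨j, (ih2 _ _ (fun m i => h (j + m) i)).mp hj, fun t htj => (ih1 _ _ (fun m i => h (t + m) i)).mp (ht t htj)⟩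
      · exact ⟨j, (ih2 _ _ (fun m i => h (j + m) i)).mpr hj, fun t htj => (ih1 _ _ (fun m i => h (t + m) i)).mpr (ht t htj)⟩
  | release φ₁ φ₂ ih1 ih2 =>
      simp only [Sat]
      constructor <;> rintro (hall | ⟨j, hj, ht⟩)
      · exact Or.inl fun j => (ih2 (shift π j) (shift σ j) (fun m i => h (j + m) i)).mp (hall j)
      · exact Or.inr ⟨j, (ih1 _ _ (fun m i => h (j + m) i)).mp hj, fun t htj => (ih2 _ _ (fun m i => h (t + m) i)).mp (ht t htj)⟩
      · exact Or.inl fun j => (ih2 (shift π j) (shift σ j) (fun m i => h (j + m) i)).mpr (hall j)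
      · exact Or.inr ⟨j, (ih1 _ _ (fun m i => h (j + m) i)).mpr hj, fun t htj => (ih2 _ _ (fun m i => h (t + m) i)).mpr (ht t htj)⟩
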